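/- Let λ₁,λ₂,λ₃,λ₄ ∈ ℝ and let [·,·] be the skew-symmetric bilinear bracket on the real vector space 𝔤 with basis X₁,X₂,X₃,X₄ determined by [X₁,X₂] = −[X₃,X₄] = λ₁X₁ + λ₂X₂ + λ₃X₃ + λ₄X₄, [X₁,X₃] = [X₂,X₄] = λ₄X₁ − λ₃X₂ + λ₂X₃ − λ₁X₄, and [X₂,X₃] = [X₁,X₄] = 0. Then this bracket satisfies the Jacobi identity, so (𝔤,[·,·]) is a 4-dimensional real Lie algebra. -/

import Mathlib

set_option maxHeartbeats 2000000 in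
/-- The skew-symmetric bilinear bracket on the 4-dimensional real
vector space `𝔤` with basis `X₁, X₂, X₃, X₄` determined by
`[X₁,X₂] = −[X₃,X₄] = λ₁X₁ + λ₂X₂ + λ₃X₃ + λ₄X₄`,
`[X₁,X₃] = [X₂,X₄] = λ₄X₁ − λ₃X₂ + λ₂X₃ − λ₁X₄`, `[X₂,X₃] = [X₁,X₄] = 0`
satisfies the Jacobi identity. -/
theorem statement_8 {G : Type*} [AddCommGroup G] [Module ℝ G]
    (X : Module.Basis (Fin 4) ℝ G)
    (l1 l2 l3 l4 : ℝ)
    (bracket : G →ₗ[ℝ] G →ₗ[ℝ] G)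
    (hskew : ∀ x y : G, bracket x y = - bracket y x)
    (h12 : bracket (X 0) (X 1) = l1 • X 0 + l2 • X 1 + l3 • X 2 + l4 • X 3)
    (h34 : bracket (X 2) (X 3) = -(l1 • X 0 + l2 • X 1 + l3 • X 2 + l4 • X 3))
    (h13 : bracket (X 0) (X 2) = l4 • X 0 - l3 • X 1 + l2 • X 2 - l1 • X 3)
    (h24 : bracket (X 1) (X 3) = l4 • X 0 - l3 • X 1 + l2 • X 2 - l1 • X 3)
    (h23 : bracket (X 1) (X 2) = 0)
    (h14 : bracket (X 0) (X 3) = 0) :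
    ∀ x y z : G, bracket (bracket x y) z + bracket (bracket y z) x + bracket (bracket z x) y = 0 := by
  -- diagonal brackets vanish
  have hdiag : ∀ v : G, bracket v v = 0 := by
    intro v
    have h3 : (2 : ℝ) • bracket v v = 0 := by
      rw [two_smul]; nth_rewrite 1 [hskew v v]; abel
    have := smul_eq_zero.mp h3
    rcases this with h' | h'
    · norm_num at h'
    · exact h'
  -- reversed brackets
  have h21 : bracket (X 1) (X 0) = -(l1 • X 0 + l2 • X 1 + l3 • X 2 + l4 • X 3) := by
    rw [hskew, h12]
  have h31 : bracket (X 2) (X 0) = -(l4 • X 0 - l3 • X 1 + l2 • X 2 - l1 • X 3) := by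
    rw [hskew, h13]
  have h41 : bracket (X 3) (X 0) = 0 := by rw [hskew, h14, neg_zero]
  have h32 : bracket (X 2) (X 1) = 0 := by rw [hskew, h23, neg_zero]
  have h42 : bracket (X 3) (X 1) = -(l4 • X 0 - l3 • X 1 + l2 • X 2 - l1 • X 3) := by
    rw [hskew, h24]
  have h43 : bracket (X 3) (X 2) = l1 • X 0 + l2 • X 1 + l3 • X 2 + l4 • X 3 := by
    rw [hskew, h34, neg_neg]
  have h11 : bracket (X 0) (X 0) = 0 := hdiag _
  have h22 : bracket (X 1) (X 1) = 0 := hdiag _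
  have h33 : bracket (X 2) (X 2) = 0 := hdiag _
  have h44 : bracket (X 3) (X 3) = 0 := hdiag _
  -- Jacobi on basis vectors
  have key : ∀ i j k : Fin 4,
      bracket (bracket (X i) (X j)) (X k) + bracket (bracket (X j) (X k)) (X i)
        + bracket (bracket (X k) (X i)) (X j) = 0 := by
    have hfin : ∀ i : Fin 4, i = 0 ∨ i = 1 ∨ i = 2 ∨ i = 3 := by decide
    intro i j k
    rcases hfin i with rfl | rfl | rfl | rfl <;>
      rcases hfin j with rfl | rfl | rfl | rfl <;>
      rcases hfin k with rfl | rfl | rfl | rfl <;>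
      simp only [Fin.isValue, map_add, map_smul, map_sub, map_neg, map_zero,
        LinearMap.add_apply, LinearMap.smul_apply, LinearMap.sub_apply,
        LinearMap.neg_apply, LinearMap.zero_apply,
        h11, h12, h13, h14, h21, h22, h23, h24, h31, h32, h33, h34,
        h41, h42, h43, h44] <;>
      module
  -- extend to general z
  have key2 : ∀ (i j : Fin 4) (z : G),
      bracket (bracket (X i) (X j)) z + bracket (bracket (X j) z) (X i)
        + bracket (bracket z (X i)) (X j) = 0 := by
    intro i j z
    rw [← X.sum_repr z]
    simp only [map_sum, map_smul, LinearMap.sum_apply, LinearMap.smul_apply]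
    rw [← Finset.sum_add_distrib, ← Finset.sum_add_distrib]
    apply Finset.sum_eq_zero
    intro k _
    rw [← smul_add, ← smul_add, key i j k, smul_zero]
  -- extend to general y, z
  have key1 : ∀ (i : Fin 4) (y z : G),
      bracket (bracket (X i) y) z + bracket (bracket y z) (X i)
        + bracket (bracket z (X i)) y = 0 := by
    intro i y z
    rw [← X.sum_repr y]
    simp only [map_sum, map_smul, LinearMap.sum_apply, LinearMap.smul_apply]
    rw [← Finset.sum_add_distrib, ← Finset.sum_add_distrib]
    apply Finset.sum_eq_zero
    intro j _
    rw [← smul_add, ← smul_add, key2 i j z, smul_zero]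
  intro x y z
  rw [← X.sum_repr x]
  simp only [map_sum, map_smul, LinearMap.sum_apply, LinearMap.smul_apply]
  rw [← Finset.sum_add_distrib, ← Finset.sum_add_distrib]
  apply Finset.sum_eq_zero
  intro i _
  rw [← smul_add, ← smul_add, key1 i y z, smul_zero]
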